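/- Let T be a tournament with n vertices whose irregularity satisfies i(T) ≤ k, let t ≥ 2 be an integer with n ≥ 6t + 5k, and let x, y be distinct vertices with an arc from x to y. Let A be the set of vertices of T − {x,y} dominated by x and B the set of vertices of T − {x,y} dominating y, and suppose A ∩ B = ∅. Then there exist at least t − 2 internally disjoint directed paths of length 3 from x to y. -/

import Mathlib

variable {V : Type*}

/-- A tournament relation: irreflexive, and between any two distinct vertices
exactly one of the two possible arcs is present. -/
def IsTournament (r : V → V → Prop) : Prop :=
  (∀ v : V, ¬ r v v) ∧ ∀ u v : V, u ≠ v → (r u v ↔ ¬ r v u)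

/-- Strong connectivity: every vertex reaches every other by a directed walk. -/
def StronglyConnected (r : V → V → Prop) : Prop :=
  ∀ u v : V, Relation.ReflTransGen r u v

/-- `k`-strong: at least `k+1` vertices, and deleting any set of fewer than `k`
vertices leaves a strongly connected digraph. -/
def KStrong [Fintype V] (r : V → V → Prop) (k : ℕ) : Prop :=
  k + 1 ≤ Fintype.card V ∧
    ∀ S : Set V, S.ncard < k → ∀ u v : V, u ∉ S → v ∉ S →
      Relation.ReflTransGen (fun a b => a ∉ S ∧ b ∉ S ∧ r a b) u v

/-- A directed path from `u` to `v`, recorded as its (nodup) list of vertices. -/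
def IsDipath (r : V → V → Prop) (u v : V) (p : List V) : Prop :=
  p.Chain' r ∧ p.Nodup ∧ p.head? = some u ∧ p.getLast? = some v

/-- A Hamiltonian directed path from `u` to `v`: a directed path containing
every vertex. -/
def IsHamDipath (r : V → V → Prop) (u v : V) (p : List V) : Prop :=
  IsDipath r u v p ∧ ∀ w : V, w ∈ p

/-- A family of paths between `x` and `y` is internally disjoint if two distinct
paths share no vertex other than `x` and `y`. -/
def InternallyDisjoint (x y : V) {k : ℕ} (ps : Fin k → List V) : Prop :=
  ∀ i j : Fin k, i ≠ j → ∀ w : V, w ∈ ps i → w ∈ ps j → w = x ∨ w = y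

/-- A strong `k*`-container between `x` and `y`: `k` internally disjoint directed
paths, all from `x` to `y` or all from `y` to `x`, whose union contains every
vertex. -/
def StrongStarContainer (r : V → V → Prop) (x y : V) (k : ℕ) : Prop :=
  ∃ ps : Fin k → List V, Function.Injective ps ∧
    ((∀ i, IsDipath r x y (ps i)) ∨ (∀ i, IsDipath r y x (ps i))) ∧
    InternallyDisjoint x y ps ∧ (∀ w : V, ∃ i, w ∈ ps i)

/-- A weak `k*`-container between `x` and `y`: `k` internally disjoint directed
paths, each from `x` to `y` or from `y` to `x`, whose union contains every
vertex. -/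
def WeakStarContainer (r : V → V → Prop) (x y : V) (k : ℕ) : Prop :=
  ∃ ps : Fin k → List V, Function.Injective ps ∧
    (∀ i, IsDipath r x y (ps i) ∨ IsDipath r y x (ps i)) ∧
    InternallyDisjoint x y ps ∧ (∀ w : V, ∃ i, w ∈ ps i)

/-- The irregularity of the digraph is at most `k`:
`|d⁺(x) − d⁻(x)| ≤ k` for every vertex `x`. -/
def IrregularityLE (r : V → V → Prop) (k : ℕ) : Prop :=
  ∀ x : V, ((({y : V | r x y}.ncard : ℤ) - ({y : V | r y x}.ncard : ℤ)).natAbs) ≤ k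

section AuxStmt15
open Finset

lemma deg_sum [Fintype V] [DecidableEq V] {r : V → V → Prop} [∀ u v, Decidable (r u v)]
    (hT : IsTournament r) (v : V) :
    (univ.filter (fun w => r v w)).card + (univ.filter (fun w => r w v)).card + 1
      = Fintype.card V := by
  have hdisj : Disjoint (univ.filter (fun w => r v w)) (univ.filter (fun w => r w v)) := by
    rw [Finset.disjoint_left]
    intro w hw hw'
    simp only [mem_filter, mem_univ, true_and] at hw hw'
    rcases eq_or_ne v w with h | h
    · exact hT.1 v (h ▸ hw)
    · exact ((hT.2 v w h).mp hw) hw'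
  have hv : v ∉ univ.filter (fun w => r v w) ∪ univ.filter (fun w => r w v) := by
    simp [hT.1 v]
  have huniv : insert v (univ.filter (fun w => r v w) ∪ univ.filter (fun w => r w v)) = univ := by
    ext w
    simp only [mem_insert, mem_union, mem_filter, mem_univ, true_and, iff_true]
    rcases eq_or_ne w v with h | h
    · exact Or.inl h
    · rcases Classical.em (r v w) with h' | h'
      · exact Or.inr (Or.inl h')
      · exact Or.inr (Or.inr ((hT.2 w v h).mpr h'))
  calc (univ.filter (fun w => r v w)).card + (univ.filter (fun w => r w v)).card + 1
      = (insert v (univ.filter (fun w => r v w) ∪ univ.filter (fun w => r w v))).card := by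
        rw [Finset.card_insert_of_notMem hv, Finset.card_union_of_disjoint hdisj]
    _ = Fintype.card V := by rw [huniv, Finset.card_univ]

lemma exists_pair [Fintype V] [DecidableEq V] {r : V → V → Prop} [∀ u v, Decidable (r u v)]
    (hT : IsTournament r) (k : ℕ) (x y : V) (A' B' : Finset V)
    (hdisj : Disjoint A' B')
    (hxA : x ∉ A') (hyA : y ∉ A') (hxB : x ∉ B') (hyB : y ∉ B') (hxy : x ≠ y)
    (hbx : ∀ b ∈ B', r b x) (hby : ∀ b ∈ B', r b y)
    (hxa : ∀ a ∈ A', r x a) (hya : ∀ a ∈ A', r y a)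
    (hout : ∀ v : V, 2 * (univ.filter (fun w => r v w)).card + 1 ≤ Fintype.card V + k)
    (hin : ∀ v : V, 2 * (univ.filter (fun w => r w v)).card + 1 ≤ Fintype.card V + k)
    (hpA : 2 * A'.card + 3 ≤ Fintype.card V + k)
    (hpB : 2 * B'.card + 3 ≤ Fintype.card V + k)
    (hnk : 12 ≤ Fintype.card V + k)
    (hbig : 2 * (Fintype.card V + k) ≤ 3 * (A'.card + B'.card) + 7) :
    ∃ a ∈ A', ∃ b ∈ B', r a b := by
  by_contra hcon
  push_neg at hcon
  have hba : ∀ b ∈ B', ∀ a ∈ A', r b a := by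
    intro b hb a ha
    have hne : a ≠ b := fun h => (Finset.disjoint_left.mp hdisj ha) (h ▸ hb)
    by_contra h'
    exact hcon a ha b hb ((hT.2 a b hne).mpr h')
  set n := Fintype.card V with hn
  set p := A'.card with hp
  set q := B'.card with hq
  have hq1 : 1 ≤ q := by omega
  have hp1 : 1 ≤ p := by omega
  -- First inequality: 2p + q + 3 ≤ n + k - 1, via out-degrees of B'
  have step1 : q * (2 * p + q + 4) ≤ q * (n + k) := by
    have hcardb : ∀ b ∈ B',
        p + (B'.filter (fun v => r b v)).card + 2 ≤ (univ.filter (fun w => r b w)).card := by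
      intro b hb
      have hsub : insert x (insert y (A' ∪ B'.filter (fun v => r b v)))
          ⊆ univ.filter (fun w => r b w) := by
        intro w hw
        simp only [mem_insert, mem_union, mem_filter, mem_univ, true_and] at hw ⊢
        rcases hw with rfl | rfl | hw | hw
        · exact hbx b hb
        · exact hby b hb
        · exact hba b hb w hw
        · exact hw.2
      have h1 : (insert x (insert y (A' ∪ B'.filter (fun v => r b v)))).card
          = p + (B'.filter (fun v => r b v)).card + 2 := by
        have hyn : y ∉ A' ∪ B'.filter (fun v => r b v) := by
          simp only [mem_union, mem_filter, not_or]
          exact ⟨hyA, fun h => hyB h.1⟩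
        have hxn : x ∉ insert y (A' ∪ B'.filter (fun v => r b v)) := by
          simp only [mem_insert, mem_union, mem_filter, not_or]
          exact ⟨hxy, hxA, fun h => hxB h.1⟩
        have hd : Disjoint A' (B'.filter (fun v => r b v)) :=
          hdisj.mono_right (Finset.filter_subset _ _)
        rw [Finset.card_insert_of_notMem hxn, Finset.card_insert_of_notMem hyn,
          Finset.card_union_of_disjoint hd]
      calc p + (B'.filter (fun v => r b v)).card + 2
          = (insert x (insert y (A' ∪ B'.filter (fun v => r b v)))).card := h1.symm
        _ ≤ (univ.filter (fun w => r b w)).card := Finset.card_le_card hsub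
    -- sums
    have hsum1 : ∑ b ∈ B', (p + (B'.filter (fun v => r b v)).card + 2)
        ≤ ∑ b ∈ B', (univ.filter (fun w => r b w)).card :=
      Finset.sum_le_sum hcardb
    have hsum2 : 2 * ∑ b ∈ B', (univ.filter (fun w => r b w)).card + q ≤ q * (n + k) := by
      calc 2 * ∑ b ∈ B', (univ.filter (fun w => r b w)).card + q
          = ∑ b ∈ B', (2 * (univ.filter (fun w => r b w)).card + 1) := by
            rw [Finset.sum_add_distrib, Finset.mul_sum, Finset.sum_const, smul_eq_mul, mul_one]
        _ ≤ ∑ _b ∈ B', (n + k) := Finset.sum_le_sum (fun b _ => hout b)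
        _ = q * (n + k) := by rw [Finset.sum_const, smul_eq_mul]
    -- pair counting inside B'
    have hpairs : q * q ≤ 2 * (∑ b ∈ B', (B'.filter (fun v => r b v)).card) + q := by
      have hone : ∀ u ∈ B',
          q ≤ (B'.filter (fun v => r u v)).card + (B'.filter (fun v => r v u)).card + 1 := by
        intro u hu
        have hsub : B' ⊆ insert u (B'.filter (fun v => r u v) ∪ B'.filter (fun v => r v u)) := by
          intro v hv
          simp only [mem_insert, mem_union, mem_filter]
          rcases eq_or_ne v u with h | h
          · exact Or.inl h
          · rcases Classical.em (r u v) with h' | h'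
            · exact Or.inr (Or.inl ⟨hv, h'⟩)
            · exact Or.inr (Or.inr ⟨hv, (hT.2 v u h).mpr h'⟩)
        calc q ≤ (insert u (B'.filter (fun v => r u v) ∪ B'.filter (fun v => r v u))).card :=
              Finset.card_le_card hsub
          _ ≤ (B'.filter (fun v => r u v) ∪ B'.filter (fun v => r v u)).card + 1 :=
              Finset.card_insert_le _ _
          _ ≤ (B'.filter (fun v => r u v)).card + (B'.filter (fun v => r v u)).card + 1 := by
              have := Finset.card_union_le (B'.filter (fun v => r u v))
                (B'.filter (fun v => r v u))
              omega
      have hTS : ∑ u ∈ B', (B'.filter (fun v => r v u)).card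
          = ∑ u ∈ B', (B'.filter (fun v => r u v)).card := by
        simp only [Finset.card_filter]
        exact Finset.sum_comm
      calc q * q = ∑ _u ∈ B', q := by rw [Finset.sum_const, smul_eq_mul]
        _ ≤ ∑ u ∈ B', ((B'.filter (fun v => r u v)).card + (B'.filter (fun v => r v u)).card + 1) :=
            Finset.sum_le_sum hone
        _ = ∑ u ∈ B', (B'.filter (fun v => r u v)).card
            + ∑ u ∈ B', (B'.filter (fun v => r v u)).card + q := by
            rw [Finset.sum_add_distrib, Finset.sum_add_distrib, Finset.sum_const, smul_eq_mul,
              mul_one]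
        _ = 2 * (∑ b ∈ B', (B'.filter (fun v => r b v)).card) + q := by rw [hTS]; ring
    have hsum1' : q * (p + 2) + (∑ b ∈ B', (B'.filter (fun v => r b v)).card)
        ≤ ∑ b ∈ B', (univ.filter (fun w => r b w)).card := by
      calc q * (p + 2) + (∑ b ∈ B', (B'.filter (fun v => r b v)).card)
          = ∑ b ∈ B', (p + (B'.filter (fun v => r b v)).card + 2) := by
            rw [Finset.sum_add_distrib, Finset.sum_add_distrib, Finset.sum_const,
              Finset.sum_const, smul_eq_mul, smul_eq_mul]
            ring
        _ ≤ _ := hsum1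
    nlinarith [hsum1', hsum2, hpairs]
  have ineq1 : 2 * p + q + 4 ≤ n + k := Nat.le_of_mul_le_mul_left step1 hq1
  -- Second inequality: 2q + p + 4 ≤ n + k, via in-degrees of A'
  have step2 : p * (2 * q + p + 4) ≤ p * (n + k) := by
    have hcarda : ∀ a ∈ A',
        q + (A'.filter (fun v => r v a)).card + 2 ≤ (univ.filter (fun w => r w a)).card := by
      intro a ha
      have hsub : insert x (insert y (B' ∪ A'.filter (fun v => r v a)))
          ⊆ univ.filter (fun w => r w a) := by
        intro w hw
        simp only [mem_insert, mem_union, mem_filter, mem_univ, true_and] at hw ⊢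
        rcases hw with rfl | rfl | hw | hw
        · exact hxa a ha
        · exact hya a ha
        · exact hba w hw a ha
        · exact hw.2
      have h1 : (insert x (insert y (B' ∪ A'.filter (fun v => r v a)))).card
          = q + (A'.filter (fun v => r v a)).card + 2 := by
        have hyn : y ∉ B' ∪ A'.filter (fun v => r v a) := by
          simp only [mem_union, mem_filter, not_or]
          exact ⟨hyB, fun h => hyA h.1⟩
        have hxn : x ∉ insert y (B' ∪ A'.filter (fun v => r v a)) := by
          simp only [mem_insert, mem_union, mem_filter, not_or]
          exact ⟨hxy, hxB, fun h => hxA h.1⟩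
        have hd : Disjoint B' (A'.filter (fun v => r v a)) :=
          hdisj.symm.mono_right (Finset.filter_subset _ _)
        rw [Finset.card_insert_of_notMem hxn, Finset.card_insert_of_notMem hyn,
          Finset.card_union_of_disjoint hd]
      calc q + (A'.filter (fun v => r v a)).card + 2
          = (insert x (insert y (B' ∪ A'.filter (fun v => r v a)))).card := h1.symm
        _ ≤ (univ.filter (fun w => r w a)).card := Finset.card_le_card hsub
    have hsum2 : 2 * ∑ a ∈ A', (univ.filter (fun w => r w a)).card + p ≤ p * (n + k) := by
      calc 2 * ∑ a ∈ A', (univ.filter (fun w => r w a)).card + p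
          = ∑ a ∈ A', (2 * (univ.filter (fun w => r w a)).card + 1) := by
            rw [Finset.sum_add_distrib, Finset.mul_sum, Finset.sum_const, smul_eq_mul, mul_one]
        _ ≤ ∑ _a ∈ A', (n + k) := Finset.sum_le_sum (fun a _ => hin a)
        _ = p * (n + k) := by rw [Finset.sum_const, smul_eq_mul]
    have hpairs : p * p ≤ 2 * (∑ a ∈ A', (A'.filter (fun v => r v a)).card) + p := by
      have hone : ∀ u ∈ A',
          p ≤ (A'.filter (fun v => r v u)).card + (A'.filter (fun v => r u v)).card + 1 := by
        intro u hu
        have hsub : A' ⊆ insert u (A'.filter (fun v => r v u) ∪ A'.filter (fun v => r u v)) := by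
          intro v hv
          simp only [mem_insert, mem_union, mem_filter]
          rcases eq_or_ne v u with h | h
          · exact Or.inl h
          · rcases Classical.em (r v u) with h' | h'
            · exact Or.inr (Or.inl ⟨hv, h'⟩)
            · exact Or.inr (Or.inr ⟨hv, (hT.2 u v h.symm).mpr h'⟩)
        calc p ≤ (insert u (A'.filter (fun v => r v u) ∪ A'.filter (fun v => r u v))).card :=
              Finset.card_le_card hsub
          _ ≤ (A'.filter (fun v => r v u) ∪ A'.filter (fun v => r u v)).card + 1 :=
              Finset.card_insert_le _ _
          _ ≤ (A'.filter (fun v => r v u)).card + (A'.filter (fun v => r u v)).card + 1 := by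
              have := Finset.card_union_le (A'.filter (fun v => r v u))
                (A'.filter (fun v => r u v))
              omega
      have hTS : ∑ u ∈ A', (A'.filter (fun v => r u v)).card
          = ∑ u ∈ A', (A'.filter (fun v => r v u)).card := by
        simp only [Finset.card_filter]
        exact Finset.sum_comm
      calc p * p = ∑ _u ∈ A', p := by rw [Finset.sum_const, smul_eq_mul]
        _ ≤ ∑ u ∈ A', ((A'.filter (fun v => r v u)).card + (A'.filter (fun v => r u v)).card + 1) :=
            Finset.sum_le_sum hone
        _ = ∑ u ∈ A', (A'.filter (fun v => r v u)).card
            + ∑ u ∈ A', (A'.filter (fun v => r u v)).card + p := by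
            rw [Finset.sum_add_distrib, Finset.sum_add_distrib, Finset.sum_const, smul_eq_mul,
              mul_one]
        _ = 2 * (∑ a ∈ A', (A'.filter (fun v => r v a)).card) + p := by rw [hTS]; ring
    have hsum1' : p * (q + 2) + (∑ a ∈ A', (A'.filter (fun v => r v a)).card)
        ≤ ∑ a ∈ A', (univ.filter (fun w => r w a)).card := by
      calc p * (q + 2) + (∑ a ∈ A', (A'.filter (fun v => r v a)).card)
          = ∑ a ∈ A', (q + (A'.filter (fun v => r v a)).card + 2) := by
            rw [Finset.sum_add_distrib, Finset.sum_add_distrib, Finset.sum_const,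
              Finset.sum_const, smul_eq_mul, smul_eq_mul]
            ring
        _ ≤ _ := Finset.sum_le_sum hcarda
    nlinarith [hsum1', hsum2, hpairs]
  have ineq2 : 2 * q + p + 4 ≤ n + k := Nat.le_of_mul_le_mul_left step2 hp1
  omega

lemma exists_pairs [Fintype V] [DecidableEq V] {r : V → V → Prop} [∀ u v, Decidable (r u v)]
    (hT : IsTournament r) (k : ℕ) (x y : V) (m : ℕ) : ∀ (A' B' : Finset V),
    Disjoint A' B' →
    x ∉ A' → y ∉ A' → x ∉ B' → y ∉ B' → x ≠ y →
    (∀ b ∈ B', r b x) → (∀ b ∈ B', r b y) →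
    (∀ a ∈ A', r x a) → (∀ a ∈ A', r y a) →
    (∀ v : V, 2 * (univ.filter (fun w => r v w)).card + 1 ≤ Fintype.card V + k) →
    (∀ v : V, 2 * (univ.filter (fun w => r w v)).card + 1 ≤ Fintype.card V + k) →
    2 * A'.card + 3 ≤ Fintype.card V + k →
    2 * B'.card + 3 ≤ Fintype.card V + k →
    12 ≤ Fintype.card V + k →
    2 * (Fintype.card V + k) + 6 * m ≤ 3 * (A'.card + B'.card) + 13 →
    ∃ fa fb : Fin m → V, Function.Injective fa ∧ Function.Injective fb ∧
      ∀ i, fa i ∈ A' ∧ fb i ∈ B' ∧ r (fa i) (fb i) := by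
  induction m with
  | zero =>
      intro A' B' _ _ _ _ _ _ _ _ _ _ _ _ _ _ _ _
      exact ⟨fun i => i.elim0, fun i => i.elim0,
        fun i => i.elim0, fun i => i.elim0, fun i => i.elim0⟩
  | succ m ih =>
      intro A' B' hdisj hxA hyA hxB hyB hxy hbx hby hxa hya hout hin hpA hpB hnk hbig
      obtain ⟨a, ha, b, hb, hab⟩ := exists_pair hT k x y A' B' hdisj hxA hyA hxB hyB hxy
        hbx hby hxa hya hout hin hpA hpB hnk (by omega)
      have hcA : (A'.erase a).card = A'.card - 1 := Finset.card_erase_of_mem ha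
      have hcB : (B'.erase b).card = B'.card - 1 := Finset.card_erase_of_mem hb
      have hA1 : 1 ≤ A'.card := Finset.card_pos.mpr ⟨a, ha⟩
      have hB1 : 1 ≤ B'.card := Finset.card_pos.mpr ⟨b, hb⟩
      obtain ⟨fa, fb, hinja, hinjb, hmem⟩ := ih (A'.erase a) (B'.erase b)
        (hdisj.mono (Finset.erase_subset _ _) (Finset.erase_subset _ _))
        (fun h => hxA (Finset.erase_subset _ _ h)) (fun h => hyA (Finset.erase_subset _ _ h))
        (fun h => hxB (Finset.erase_subset _ _ h)) (fun h => hyB (Finset.erase_subset _ _ h))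
        hxy
        (fun b' hb' => hbx b' (Finset.erase_subset _ _ hb'))
        (fun b' hb' => hby b' (Finset.erase_subset _ _ hb'))
        (fun a' ha' => hxa a' (Finset.erase_subset _ _ ha'))
        (fun a' ha' => hya a' (Finset.erase_subset _ _ ha'))
        hout hin (by omega) (by omega) hnk (by rw [hcA, hcB]; omega)
      refine ⟨Fin.cons a fa, Fin.cons b fb, ?_, ?_, ?_⟩
      · intro i j hij
        rcases Fin.eq_zero_or_eq_succ i with rfl | ⟨i', rfl⟩ <;>
          rcases Fin.eq_zero_or_eq_succ j with rfl | ⟨j', rfl⟩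
        · rfl
        · simp only [Fin.cons_zero, Fin.cons_succ] at hij
          exact absurd ((hmem j').1) (by rw [← hij]; exact Finset.notMem_erase a A')
        · simp only [Fin.cons_zero, Fin.cons_succ] at hij
          exact absurd ((hmem i').1) (by rw [hij]; exact Finset.notMem_erase a A')
        · simp only [Fin.cons_succ] at hij
          rw [hinja hij]
      · intro i j hij
        rcases Fin.eq_zero_or_eq_succ i with rfl | ⟨i', rfl⟩ <;>
          rcases Fin.eq_zero_or_eq_succ j with rfl | ⟨j', rfl⟩
        · rfl
        · simp only [Fin.cons_zero, Fin.cons_succ] at hij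
          exact absurd ((hmem j').2.1) (by rw [← hij]; exact Finset.notMem_erase b B')
        · simp only [Fin.cons_zero, Fin.cons_succ] at hij
          exact absurd ((hmem i').2.1) (by rw [hij]; exact Finset.notMem_erase b B')
        · simp only [Fin.cons_succ] at hij
          rw [hinjb hij]
      · intro i
        rcases Fin.eq_zero_or_eq_succ i with rfl | ⟨i', rfl⟩
        · simp only [Fin.cons_zero]
          exact ⟨ha, hb, hab⟩
        · simp only [Fin.cons_succ]
          exact ⟨Finset.erase_subset _ _ (hmem i').1,
            Finset.erase_subset _ _ (hmem i').2.1, (hmem i').2.2⟩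

theorem stmt15_aux [Fintype V] (r : V → V → Prop) (hT : IsTournament r)
    (k t : ℕ)
    (hirr : ∀ x : V, ((({y : V | r x y}.ncard : ℤ) - ({y : V | r y x}.ncard : ℤ)).natAbs) ≤ k)
    (ht : 2 ≤ t)
    (hn : 6 * t + 5 * k ≤ Fintype.card V)
    (x y : V) (hxy : r x y)
    (hAB : ∀ w : V, w ≠ x → w ≠ y → ¬ (r x w ∧ r w y)) :
    ∃ ps : Fin (t - 2) → List V, Function.Injective ps ∧
      (∀ i, IsDipath r x y (ps i) ∧ (ps i).length = 4) ∧
      InternallyDisjoint x y ps := by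
  classical
  set n := Fintype.card V with hndef
  have hxyne : x ≠ y := fun h => hT.1 x (h ▸ hxy)
  -- translate ncard to filter cards
  have hsetout : ∀ v : V, {w : V | r v w}.ncard = (univ.filter (fun w => r v w)).card := by
    intro v
    have : {w : V | r v w} = ↑(univ.filter (fun w => r v w)) := by ext w; simp
    rw [this, Set.ncard_coe_finset]
  have hsetin : ∀ v : V, {w : V | r w v}.ncard = (univ.filter (fun w => r w v)).card := by
    intro v
    have : {w : V | r w v} = ↑(univ.filter (fun w => r w v)) := by ext w; simp
    rw [this, Set.ncard_coe_finset]
  have hdeg : ∀ v : V, (univ.filter (fun w => r v w)).card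
      + (univ.filter (fun w => r w v)).card + 1 = n := fun v => deg_sum hT v
  have hirr' : ∀ v : V,
      (((univ.filter (fun w => r v w)).card : ℤ)
        - ((univ.filter (fun w => r w v)).card : ℤ)).natAbs ≤ k := by
    intro v
    have := hirr v
    rwa [hsetout v, hsetin v] at this
  have hout : ∀ v : V, 2 * (univ.filter (fun w => r v w)).card + 1 ≤ n + k := by
    intro v; have h1 := hdeg v; have h2 := hirr' v; omega
  have hin : ∀ v : V, 2 * (univ.filter (fun w => r w v)).card + 1 ≤ n + k := by
    intro v; have h1 := hdeg v; have h2 := hirr' v; omega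
  have houtlow : ∀ v : V, n ≤ 2 * (univ.filter (fun w => r v w)).card + k + 1 := by
    intro v; have h1 := hdeg v; have h2 := hirr' v; omega
  have hinlow : ∀ v : V, n ≤ 2 * (univ.filter (fun w => r w v)).card + k + 1 := by
    intro v; have h1 := hdeg v; have h2 := hirr' v; omega
  -- the sets A and B
  set A : Finset V := univ.filter (fun w => w ≠ x ∧ w ≠ y ∧ r x w) with hAdef
  set B : Finset V := univ.filter (fun w => w ≠ x ∧ w ≠ y ∧ r w y) with hBdef
  have hAx : univ.filter (fun w => r x w) = insert y A := by
    ext w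
    simp only [hAdef, mem_filter, mem_univ, true_and, mem_insert]
    constructor
    · intro hw
      rcases eq_or_ne w y with h | h
      · exact Or.inl h
      · exact Or.inr ⟨fun h' => hT.1 x (h' ▸ hw), h, hw⟩
    · rintro (rfl | hw)
      · exact hxy
      · exact hw.2.2
  have hBy : univ.filter (fun w => r w y) = insert x B := by
    ext w
    simp only [hBdef, mem_filter, mem_univ, true_and, mem_insert]
    constructor
    · intro hw
      rcases eq_or_ne w x with h | h
      · exact Or.inl h
      · exact Or.inr ⟨h, fun h' => hT.1 y (h' ▸ hw), hw⟩
    · rintro (rfl | hw)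
      · exact hxy
      · exact hw.2.2
  have hyA : y ∉ A := by simp [hAdef]
  have hxB : x ∉ B := by simp [hBdef]
  have hxA : x ∉ A := by simp [hAdef]
  have hyB : y ∉ B := by simp [hBdef]
  have hAcard : (univ.filter (fun w => r x w)).card = A.card + 1 := by
    rw [hAx, Finset.card_insert_of_notMem hyA]
  have hBcard : (univ.filter (fun w => r w y)).card = B.card + 1 := by
    rw [hBy, Finset.card_insert_of_notMem hxB]
  have hpA : 2 * A.card + 3 ≤ n + k := by have := hout x; omega
  have hpB : 2 * B.card + 3 ≤ n + k := by have := hin y; omega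
  have hnA : n ≤ 2 * A.card + k + 3 := by have := houtlow x; omega
  have hnB : n ≤ 2 * B.card + k + 3 := by have := hinlow y; omega
  have hdisj : Disjoint A B := by
    rw [Finset.disjoint_left]
    intro w hwA hwB
    simp only [hAdef, hBdef, mem_filter, mem_univ, true_and] at hwA hwB
    exact hAB w hwA.1 hwA.2.1 ⟨hwA.2.2, hwB.2.2⟩
  have hbx : ∀ b ∈ B, r b x := by
    intro b hb
    simp only [hBdef, mem_filter, mem_univ, true_and] at hb
    have hnxb : ¬ r x b := fun h => hAB b hb.1 hb.2.1 ⟨h, hb.2.2⟩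
    exact (hT.2 b x hb.1).mpr hnxb
  have hby : ∀ b ∈ B, r b y := by
    intro b hb
    simp only [hBdef, mem_filter, mem_univ, true_and] at hb
    exact hb.2.2
  have hxa : ∀ a ∈ A, r x a := by
    intro a ha
    simp only [hAdef, mem_filter, mem_univ, true_and] at ha
    exact ha.2.2
  have hya : ∀ a ∈ A, r y a := by
    intro a ha
    simp only [hAdef, mem_filter, mem_univ, true_and] at ha
    have hnay : ¬ r a y := fun h => hAB a ha.1 ha.2.1 ⟨ha.2.2, h⟩
    exact (hT.2 y a (Ne.symm ha.2.1)).mpr hnay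
  obtain ⟨fa, fb, hinja, hinjb, hmem⟩ := exists_pairs hT k x y (t - 2) A B hdisj
    hxA hyA hxB hyB hxyne hbx hby hxa hya hout hin hpA hpB (by omega) (by omega)
  have hfaA : ∀ i, fa i ∈ A := fun i => (hmem i).1
  have hfbB : ∀ i, fb i ∈ B := fun i => (hmem i).2.1
  have hfax : ∀ i, fa i ≠ x := by
    intro i h; exact hxA (h ▸ hfaA i)
  have hfay : ∀ i, fa i ≠ y := by
    intro i h; exact hyA (h ▸ hfaA i)
  have hfbx : ∀ i, fb i ≠ x := by
    intro i h; exact hxB (h ▸ hfbB i)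
  have hfby : ∀ i, fb i ≠ y := by
    intro i h; exact hyB (h ▸ hfbB i)
  have hfafb : ∀ i j, fa i ≠ fb j := by
    intro i j h
    exact (Finset.disjoint_left.mp hdisj (hfaA i)) (h ▸ hfbB j)
  refine ⟨fun i => [x, fa i, fb i, y], ?_, ?_, ?_⟩
  · intro i j hij
    simp only [List.cons.injEq, and_true] at hij
    exact hinja hij.2.1
  · intro i
    refine ⟨⟨?_, ?_, rfl, rfl⟩, rfl⟩
    · simp only [List.isChain_cons_cons, List.isChain_singleton, and_true]
      exact List.isChain_cons_cons.mpr ⟨hxa _ (hfaA i), List.isChain_cons_cons.mpr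
        ⟨(hmem i).2.2, List.isChain_pair.mpr (hby _ (hfbB i))⟩⟩
    · simp only [List.nodup_cons, List.mem_cons, List.mem_singleton, List.not_mem_nil,
        not_or, List.nodup_nil, and_true, not_false_eq_true, List.mem_nil_iff]
      exact ⟨⟨Ne.symm (hfax i), Ne.symm (hfbx i), hxyne⟩,
        ⟨hfafb i i, hfay i⟩, hfby i⟩
  · intro i j hij w hwi hwj
    simp only [List.mem_cons, List.not_mem_nil, or_false] at hwi hwj
    rcases hwi with rfl | rfl | rfl | rfl
    · exact Or.inl rfl
    · rcases hwj with h | h | h | h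
      · exact Or.inl h
      · exact absurd (hinja h) hij
      · exact absurd h (hfafb i j)
      · exact Or.inr h
    · rcases hwj with h | h | h | h
      · exact Or.inl h
      · exact absurd h.symm (hfafb j i)
      · exact absurd (hinjb h) hij
      · exact Or.inr h
    · exact Or.inr rfl

end AuxStmt15

/-- Let `T` be a tournament on `n ≥ 6t + 5k` vertices (`t ≥ 2`) with
irregularity at most `k`, and let `x` dominate `y`. If no vertex outside `{x,y}`
is both dominated by `x` and dominating `y` (i.e. `A ∩ B = ∅`), then there are at
least `t − 2` internally disjoint directed paths of length 3 from `x` to `y`. -/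
theorem stmt15 [Fintype V] (r : V → V → Prop) (hT : IsTournament r)
    (k t : ℕ) (hirr : IrregularityLE r k) (ht : 2 ≤ t)
    (hn : 6 * t + 5 * k ≤ Fintype.card V)
    (x y : V) (hxy : r x y)
    (hAB : ∀ w : V, w ≠ x → w ≠ y → ¬ (r x w ∧ r w y)) :
    ∃ ps : Fin (t - 2) → List V, Function.Injective ps ∧
      (∀ i, IsDipath r x y (ps i) ∧ (ps i).length = 4) ∧
      InternallyDisjoint x y ps :=
  stmt15_aux r hT k t hirr ht hn x y hxy hAB
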